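/- arXiv:1405.1894 — 6 statements merged into one kernel-verified Lean document; each statement's English description precedes it below -/
import Mathlib

section
/- Given a finite set P of b points on the real line, all contained in an interval [ℓ, r] of length w = r − ℓ > 2, there exists a point p in the open interval (ℓ+1, r−1) such that at most 2b/(w−2) points of P lie within distance 1 of p. -/
open Classical in
theorem stmt_0 (P : Finset ℝ) (b : ℕ) (ℓ r : ℝ)
    (hcard : P.card = b) (hsub : ∀ q ∈ P, q ∈ Set.Icc ℓ r) (hw : r - ℓ > 2) :
    ∃ p ∈ Set.Ioo (ℓ + 1) (r - 1),
      ((P.filter (fun q => |q - p| ≤ 1)).card : ℝ) ≤ 2 * b / (r - ℓ - 2) := by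
  set w : ℝ := r - ℓ with hwdef
  have hw2 : w - 2 > 0 := by simp only [hwdef]; linarith
  set N : ℕ := ⌈(w - 2) / 2⌉₊ with hNdef
  have hNpos : 0 < N := Nat.ceil_pos.mpr (by linarith)
  have hN1 : (w - 2) / 2 ≤ (N : ℝ) := Nat.le_ceil _
  have hN2 : (N : ℝ) < (w - 2) / 2 + 1 := Nat.ceil_lt_add_one (by positivity)
  have hδ : 0 < w - 2 - 2 * ((N : ℝ) - 1) := by linarith
  set B : Finset ℝ := (P ×ˢ Finset.range N).image
    (fun qi => qi.1 - (ℓ + 2 + 2 * qi.2)) with hB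
  obtain ⟨ε, hε, hεB⟩ := (Set.Ioo_infinite hδ).exists_notMem_finset B
  obtain ⟨hε0, hεδ⟩ := hε
  set p : ℕ → ℝ := fun i => ℓ + 1 + ε + 2 * i with hp
  have hpmem : ∀ i ∈ Finset.range N, p i ∈ Set.Ioo (ℓ + 1) (r - 1) := by
    intro i hi
    simp only [Finset.mem_range] at hi
    have hi' : (i : ℝ) ≤ (N : ℝ) - 1 := by
      have : (i : ℝ) + 1 ≤ N := by exact_mod_cast hi
      linarith
    have hεδ' : ε < r - ℓ - 2 - 2 * ((N : ℝ) - 1) := by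
      simp only [hwdef] at hεδ; exact hεδ
    constructor
    · simp only [hp]; linarith
    · simp only [hp]; linarith
  set S : ℕ → Finset ℝ := fun i => P.filter (fun q => |q - p i| ≤ 1) with hS
  have hdisj : ∀ i ∈ Finset.range N, ∀ j ∈ Finset.range N, i ≠ j →
      Disjoint (S i) (S j) := by
    have key : ∀ i j, i ∈ Finset.range N → j ∈ Finset.range N → i < j →
        Disjoint (S i) (S j) := by
      intro i j hi hj hij
      rw [Finset.disjoint_left]
      intro q hqi hqj
      simp only [hS, Finset.mem_filter] at hqi hqj
      obtain ⟨hqP, hqi⟩ := hqi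
      obtain ⟨_, hqj⟩ := hqj
      rw [abs_le] at hqi hqj
      have hij' : (i : ℝ) + 1 ≤ j := by exact_mod_cast hij
      have hq1 : q = p i + 1 := by
        simp only [hp] at hqi hqj ⊢; linarith
      apply hεB
      simp only [hB, Finset.mem_image, Finset.mem_product]
      refine ⟨(q, i), ⟨hqP, hi⟩, ?_⟩
      simp only [hp] at hq1
      simp [hq1]; ring
    intro i hi j hj hij
    rcases lt_or_gt_of_ne hij with h | h
    · exact key i j hi hj h
    · exact (key j i hj hi h).symm
  have hsum : ∑ i ∈ Finset.range N, (S i).card ≤ b := by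
    rw [← Finset.card_biUnion hdisj, ← hcard]
    apply Finset.card_le_card
    intro q hq
    simp only [Finset.mem_biUnion, hS, Finset.mem_filter] at hq
    obtain ⟨i, _, hqP, _⟩ := hq
    exact hqP
  have hmin : ∃ i ∈ Finset.range N, N * (S i).card ≤ b := by
    by_contra h
    push_neg at h
    have : N * (b + 1) ≤ N * b := by
      calc N * (b + 1) = ∑ _i ∈ Finset.range N, (b + 1) := by
            simp [Finset.sum_const, mul_comm]
        _ ≤ ∑ i ∈ Finset.range N, N * (S i).card :=
            Finset.sum_le_sum (fun i hi => h i hi)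
        _ = N * ∑ i ∈ Finset.range N, (S i).card := by
            rw [Finset.mul_sum]
        _ ≤ N * b := Nat.mul_le_mul_left _ hsum
    simp [Nat.mul_add] at this; omega
  obtain ⟨i, hi, hile⟩ := hmin
  refine ⟨p i, hpmem i hi, ?_⟩
  have hNR : (0 : ℝ) < N := by exact_mod_cast hNpos
  have hcast : (N : ℝ) * (S i).card ≤ (b : ℝ) := by exact_mod_cast hile
  have h1 : ((S i).card : ℝ) ≤ (b : ℝ) / N := by
    rw [le_div_iff₀ hNR]; linarith
  have h2 : (b : ℝ) / N ≤ 2 * b / (w - 2) := by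
    rw [div_le_div_iff₀ hNR hw2]
    have hb : (0 : ℝ) ≤ b := Nat.cast_nonneg b
    nlinarith
  simp only [hwdef] at h2
  exact h1.trans h2
end

section
/- Let v₁, …, v_d be linearly independent unit vectors in ℝ^d and H₁, …, H_d hyperplanes with normal vectors v₁, …, v_d respectively. Then the number of pairwise disjoint unit balls each entirely contained within distance wᵢ of Hᵢ for all i is at most (2^d · w₁⋯w_d) / (|det(v₁,…,v_d)| · V_d), where V_d is the volume of the d-dimensional unit ball. -/
open MeasureTheory in
theorem stmt_2 (d : ℕ) (hd : 1 ≤ d)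
    (v : Fin d → EuclideanSpace ℝ (Fin d))
    (hunit : ∀ i, ‖v i‖ = 1) (hli : LinearIndependent ℝ v)
    (c : Fin d → ℝ) (w : Fin d → ℝ) (hw : ∀ i, 0 < w i)
    (N : ℕ) (p : Fin N → EuclideanSpace ℝ (Fin d))
    (hdisj : ∀ a b : Fin N, a ≠ b →
      Disjoint (Metric.closedBall (p a) 1) (Metric.closedBall (p b) 1))
    (hnear : ∀ a : Fin N, ∀ i : Fin d, ∀ x ∈ Metric.closedBall (p a) 1,
      |inner ℝ x (v i) - c i| ≤ w i) :
    (N : ℝ) ≤ 2 ^ d * (∏ i, w i) /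
      (|(Matrix.of (fun i j : Fin d => v j i)).det| *
        (volume (Metric.closedBall (0 : EuclideanSpace ℝ (Fin d)) 1)).toReal) := by
  classical
  set A : Matrix (Fin d) (Fin d) ℝ := Matrix.of (fun i j : Fin d => v i j) with hA
  -- determinant nonzero
  have hrows : LinearIndependent ℝ (fun i => A i) := by
    have := hli.map' (WithLp.linearEquiv 2 ℝ (Fin d → ℝ)).toLinearMap
      (WithLp.linearEquiv 2 ℝ (Fin d → ℝ)).ker
    convert this using 1 <;> rfl
  have hAunit : IsUnit A := Matrix.linearIndependent_rows_iff_isUnit.mp hrows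
  have hAdet : A.det ≠ 0 := by
    intro h
    have := hAunit.map (Matrix.detMonoidHom)
    rw [Matrix.coe_detMonoidHom] at this
    rw [h] at this
    exact not_isUnit_zero this
  -- the linear map
  set T : EuclideanSpace ℝ (Fin d) →ₗ[ℝ] EuclideanSpace ℝ (Fin d) :=
    Matrix.toEuclideanLin A with hT
  have hTdet : LinearMap.det T = A.det := by
    rw [hT, Matrix.toEuclideanLin_eq_toLin, LinearMap.det_toLin]
  have hTapp : ∀ (x : EuclideanSpace ℝ (Fin d)) (i : Fin d),
      T x i = inner ℝ x (v i) := by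
    intro x i
    rw [hT]
    simp only [Matrix.toEuclideanLin_apply]
    rw [PiLp.inner_apply]
    simp only [RCLike.inner_apply, conj_trivial]
    show (A.mulVec x) i = _
    rw [Matrix.mulVec, dotProduct]
    exact Finset.sum_congr rfl fun j _ => rfl
  -- the box and slab
  set box : Set (Fin d → ℝ) := Set.univ.pi fun i => Set.Icc (c i - w i) (c i + w i)
    with hbox
  set S : Set (EuclideanSpace ℝ (Fin d)) :=
    T ⁻¹' (((MeasurableEquiv.toLp 2 (Fin d → ℝ)).symm) ⁻¹' box) with hS
  have hboxmeas : MeasurableSet box := by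
    exact MeasurableSet.univ_pi fun i => measurableSet_Icc
  have hvolbox : volume box = ENNReal.ofReal (∏ i, (2 * w i)) := by
    rw [hbox, volume_pi_pi]
    simp only [Real.volume_Icc]
    rw [← ENNReal.ofReal_prod_of_nonneg]
    · congr 1
      exact Finset.prod_congr rfl fun i _ => by ring
    · intro i _
      linarith [hw i]
  have hvolS : volume S =
      ENNReal.ofReal |(LinearMap.det T)|⁻¹ * ENNReal.ofReal (∏ i, (2 * w i)) := by
    rw [hS]
    rw [Measure.addHaar_preimage_linearMap volume (by rw [hTdet]; exact hAdet)]
    rw [abs_inv]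
    congr 1
    rw [← hvolbox]
    exact (EuclideanSpace.volume_preserving_symm_measurableEquiv_toLp (Fin d)).measure_preimage
      hboxmeas.nullMeasurableSet
  -- balls inside slab
  have hball : ∀ a : Fin N, Metric.closedBall (p a) 1 ⊆ S := by
    intro a x hx
    rw [hS]
    simp only [Set.mem_preimage]
    intro i _
    have := hnear a i x hx
    rw [abs_le] at this
    have h1 : ((MeasurableEquiv.toLp 2 (Fin d → ℝ)).symm) (T x) i = T x i := rfl
    rw [Set.mem_Icc, h1, hTapp x i]
    constructor <;> linarith [this.1, this.2]
  -- volume counting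
  set V : ENNReal := volume (Metric.closedBall (0 : EuclideanSpace ℝ (Fin d)) 1) with hV
  have hVpos : 0 < V := Metric.measure_closedBall_pos volume 0 one_pos
  have hVlt : V < ⊤ := measure_closedBall_lt_top
  have hcount : (N : ENNReal) * V ≤ volume S := by
    have h1 : volume (⋃ a : Fin N, Metric.closedBall (p a) 1) =
        ∑' a : Fin N, volume (Metric.closedBall (p a) 1) := by
      apply measure_iUnion
      · exact fun a b hab => hdisj a b hab
      · exact fun a => measurableSet_closedBall
    have h2 : ∀ a : Fin N, volume (Metric.closedBall (p a) 1) = V := by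
      intro a
      rw [hV]
      exact Measure.addHaar_closedBall_center volume (p a) 1
    calc (N : ENNReal) * V = ∑' a : Fin N, volume (Metric.closedBall (p a) 1) := by
          rw [tsum_fintype]
          simp [h2, Finset.sum_const, nsmul_eq_mul]
      _ = volume (⋃ a : Fin N, Metric.closedBall (p a) 1) := h1.symm
      _ ≤ volume S := measure_mono (Set.iUnion_subset hball)
  rw [hvolS] at hcount
  -- pass to reals
  set D : ℝ := |(Matrix.of (fun i j : Fin d => v j i)).det| with hD
  have hdet_eq : |LinearMap.det T| = D := by
    rw [hTdet, hD]
    congr 1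
    rw [← Matrix.det_transpose (Matrix.of fun i j : Fin d => v j i)]
    rfl
  have hDpos : 0 < D := by
    rw [← hdet_eq, hTdet]
    exact abs_pos.mpr hAdet
  have hreal : (N : ℝ) * V.toReal ≤ D⁻¹ * ∏ i, (2 * w i) := by
    have hprod : (0:ℝ) ≤ ∏ i, (2 * w i) :=
      Finset.prod_nonneg fun i _ => by linarith [hw i]
    have := ENNReal.toReal_mono (by
      rw [← ENNReal.ofReal_mul (by positivity)]
      exact ENNReal.ofReal_ne_top) hcount
    rw [ENNReal.toReal_mul, ENNReal.toReal_natCast] at this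
    rw [ENNReal.toReal_mul, ENNReal.toReal_ofReal (by positivity),
      ENNReal.toReal_ofReal hprod] at this
    rw [hdet_eq] at this
    exact this
  have hVr : 0 < V.toReal := ENNReal.toReal_pos hVpos.ne' hVlt.ne
  rw [le_div_iff₀ (by positivity)]
  have key : ∏ i, (2 * w i) = 2 ^ d * ∏ i, w i := by
    rw [Finset.prod_mul_distrib, Finset.prod_const, Finset.card_univ, Fintype.card_fin]
  rw [key] at hreal
  have h3 : (N : ℝ) * V.toReal * D ≤ 2 ^ d * ∏ i, w i := by
    have := mul_le_mul_of_nonneg_right hreal hDpos.le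
    rw [mul_comm (D⁻¹ * _) D, ← mul_assoc, mul_inv_cancel₀ hDpos.ne', one_mul] at this
    exact this
  calc (N:ℝ) * (D * V.toReal) = (N:ℝ) * V.toReal * D := by ring
    _ ≤ 2 ^ d * ∏ i, w i := h3
end

section
/- Let k be a prime and define p_i = (1/k)·(i, i² mod k, …, i^d mod k) ∈ [0,1]^d for i = 0,…,k−1. Then any d+1 of these points span a d-simplex of volume at least 1/(d!·k^d). -/
open Matrix Polynomial

theorem stmt_4 (k : ℕ) (hk : k.Prime) (d : ℕ) (hd : 1 ≤ d)
    (p : Fin k → Fin d → ℝ)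
    (hp : ∀ i : Fin k, ∀ j : Fin d, p i j = ((i : ℕ) ^ ((j : ℕ) + 1) % k : ℕ) / (k : ℝ))
    (idx : Fin (d + 1) → Fin k) (hinj : Function.Injective idx) :
    (1 : ℝ) / (Nat.factorial d * (k : ℝ) ^ d) ≤
      |(Matrix.of (fun r j : Fin d => p (idx j.succ) r - p (idx 0) r)).det|
        / Nat.factorial d := by
  haveI := Fact.mk hk
  have hk0 : (0:ℝ) < k := by exact_mod_cast hk.pos
  set A : Matrix (Fin d) (Fin d) ℤ :=
    Matrix.of (fun r j : Fin d =>
      (((idx j.succ : ℕ) ^ ((r:ℕ)+1) % k : ℕ) : ℤ)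
        - (((idx 0 : ℕ) ^ ((r:ℕ)+1) % k : ℕ) : ℤ)) with hA
  -- the real matrix is (1/k) • A
  have hM : Matrix.of (fun r j : Fin d => p (idx j.succ) r - p (idx 0) r)
      = (k:ℝ)⁻¹ • (A.map (Int.cast : ℤ → ℝ)) := by
    ext r j
    simp only [Matrix.of_apply, hp, hA, Matrix.smul_apply, Matrix.map_apply, smul_eq_mul,
      Int.cast_sub, Int.cast_natCast]
    ring
  -- det over ZMod k is nonzero
  set y : Fin (d+1) → ZMod k := fun t => ((idx t : ℕ) : ZMod k) with hy
  have hyinj : Function.Injective y := by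
    intro s t h
    apply hinj
    apply Fin.val_injective
    have := congrArg ZMod.val h
    rwa [hy, ZMod.val_natCast_of_lt (idx s).isLt,
      ZMod.val_natCast_of_lt (idx t).isLt] at this
  have hBdet : ((A.det : ℤ) : ZMod k) ≠ 0 := by
    have hmap : ((A.det : ℤ) : ZMod k) = (A.map (Int.castRingHom (ZMod k))).det := by
      have h := RingHom.map_det (Int.castRingHom (ZMod k)) A
      simpa [RingHom.mapMatrix_apply] using h
    rw [hmap]
    set B := A.map (Int.castRingHom (ZMod k)) with hB
    have hBe : ∀ r j : Fin d, B r j = y j.succ ^ ((r:ℕ)+1) - y 0 ^ ((r:ℕ)+1) := by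
      intro r j
      simp only [hB, hA, Matrix.map_apply, Matrix.of_apply, Int.coe_castRingHom]
      push_cast [ZMod.natCast_mod]
      ring
    intro h0
    obtain ⟨v, hv, hvB⟩ := Matrix.exists_vecMul_eq_zero_iff.mpr h0
    set P : (ZMod k)[X] :=
      ∑ r : Fin d, C (v r) * (X ^ ((r:ℕ)+1) - C (y 0 ^ ((r:ℕ)+1))) with hP
    have hPeval : ∀ t : Fin (d+1), P.eval (y t) = 0 := by
      intro t
      induction t using Fin.cases with
      | zero =>
        rw [hP]
        simp only [Polynomial.eval_finset_sum, eval_mul, eval_C, eval_sub, eval_pow,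
          eval_X, sub_self, mul_zero, Finset.sum_const_zero]
      | succ j =>
        have := congrFun hvB j
        simp only [Matrix.vecMul, dotProduct, Pi.zero_apply] at this
        simp only [hP, eval_finset_sum, eval_mul, eval_C, eval_sub, eval_pow, eval_X]
        rw [← this]
        apply Finset.sum_congr rfl
        intro r _
        rw [hBe r j]
    have hPdeg : P.natDegree ≤ d := by
      apply Polynomial.natDegree_sum_le_of_forall_le
      intro r _
      apply le_trans (Polynomial.natDegree_mul_le)
      have : (X ^ ((r:ℕ)+1) - C (y 0 ^ ((r:ℕ)+1))).natDegree ≤ (r:ℕ)+1 := by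
        apply le_trans (Polynomial.natDegree_sub_le _ _)
        simp [Polynomial.natDegree_X_pow]
      simp only [Polynomial.natDegree_C, zero_add]
      exact le_trans this (by omega)
    have hP0 : P = 0 := by
      apply Polynomial.eq_zero_of_natDegree_lt_card_of_eval_eq_zero P hyinj hPeval
      simpa using Nat.lt_succ_of_le hPdeg
    apply hv
    funext s
    have := congrArg (fun q => Polynomial.coeff q ((s:ℕ)+1)) hP0
    simp only [hP, Polynomial.finset_sum_coeff, Polynomial.coeff_zero,
      Polynomial.coeff_C_mul, Polynomial.coeff_sub, Polynomial.coeff_X_pow,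
      Polynomial.coeff_C, Nat.add_eq_zero, Nat.succ_ne_zero, and_false, if_false,
      sub_zero, mul_ite, mul_one, mul_zero] at this
    simp only [add_left_inj, Fin.val_inj, Finset.sum_ite_eq, Finset.mem_univ,
      if_true] at this
    exact this
  have hAdet : (1:ℤ) ≤ |A.det| := by
    rcases eq_or_ne A.det 0 with h | h
    · exact absurd (by simp [h]) hBdet
    · exact Int.one_le_abs (by exact_mod_cast h)
  have hdet : |(Matrix.of (fun r j : Fin d => p (idx j.succ) r - p (idx 0) r)).det|
      = |((A.det : ℤ) : ℝ)| / (k:ℝ)^d := by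
    have hmap : ((A.det : ℤ) : ℝ) = (A.map (Int.castRingHom ℝ)).det := by
      have h := RingHom.map_det (Int.castRingHom ℝ) A
      simpa [RingHom.mapMatrix_apply] using h
    rw [hM, Matrix.det_smul, show (A.map (Int.cast : ℤ → ℝ)) = A.map (Int.castRingHom ℝ) from rfl,
      ← hmap]
    rw [abs_mul, abs_pow, abs_inv, abs_of_nonneg hk0.le, Fintype.card_fin]
    rw [div_eq_mul_inv, inv_pow, mul_comm]
  rw [hdet, div_div, mul_comm ((k:ℝ)^d)]
  rw [div_le_div_iff_of_pos_right (by positivity)]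
  exact_mod_cast hAdet
end

section
/- Let k be prime and p_i = (1/k)·(i, i² mod k, …, i^d mod k). Then any d+1 of these points are affinely independent (the simplex they span is nondegenerate). -/
theorem stmt_5 (k : ℕ) (hk : k.Prime) (d : ℕ) (hd : 1 ≤ d)
    (p : Fin k → Fin d → ℝ)
    (hp : ∀ i : Fin k, ∀ j : Fin d, p i j = ((i : ℕ) ^ ((j : ℕ) + 1) % k : ℕ) / (k : ℝ))
    (idx : Fin (d + 1) → Fin k) (hinj : Function.Injective idx) :
    AffineIndependent ℝ (fun j : Fin (d + 1) => p (idx j)) := by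
  haveI : Fact k.Prime := ⟨hk⟩
  have hk0 : (k : ℝ) ≠ 0 := Nat.cast_ne_zero.mpr hk.pos.ne'
  -- integer matrix
  set M : Matrix (Fin (d + 1)) (Fin (d + 1)) ℤ :=
    Matrix.of (fun j i => if (i : ℕ) = 0 then 1 else
      (((idx j : ℕ) ^ (i : ℕ) % k : ℕ) : ℤ)) with hM
  -- its reduction mod k is a Vandermonde matrix
  have hMmod : (M.map (Int.cast : ℤ → ZMod k)) =
      Matrix.vandermonde (fun j => ((idx j : ℕ) : ZMod k)) := by
    ext j i
    simp only [Matrix.map_apply, hM, Matrix.of_apply, Matrix.vandermonde_apply]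
    split_ifs with h
    · simp [h]
    · push_cast
      ring
  have hvinj : ∀ a b : Fin (d + 1), ((idx a : ℕ) : ZMod k) = ((idx b : ℕ) : ZMod k) → a = b := by
    intro a b hab
    apply hinj
    have := (ZMod.natCast_eq_natCast_iff' _ _ _).mp hab
    rw [Nat.mod_eq_of_lt (idx a).isLt, Nat.mod_eq_of_lt (idx b).isLt] at this
    exact Fin.ext this
  have hdetM : (M.det : ZMod k) ≠ 0 := by
    have h1 : ((M.det : ℤ) : ZMod k) = (M.map (Int.cast : ℤ → ZMod k)).det := by
      exact (Int.castRingHom (ZMod k)).map_det M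
    rw [h1, hMmod, Matrix.det_vandermonde]
    apply Finset.prod_ne_zero_iff.mpr
    intro i _
    apply Finset.prod_ne_zero_iff.mpr
    intro j hj
    simp only [Finset.mem_Ioi] at hj
    exact sub_ne_zero.mpr fun h => (ne_of_gt hj) (hvinj _ _ h)
  have hdetMZ : M.det ≠ 0 := fun h => hdetM (by rw [h]; simp)
  -- the real matrix whose rows are (1, p (idx j))
  set B : Matrix (Fin (d + 1)) (Fin (d + 1)) ℝ :=
    Matrix.of (fun j i => (if (i : ℕ) = 0 then 1 else (k : ℝ)⁻¹) * ((M j i : ℤ) : ℝ)) with hB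
  have hdetB : B.det ≠ 0 := by
    have : B = Matrix.of (fun j i => (fun i : Fin (d+1) => if (i : ℕ) = 0 then (1:ℝ) else (k : ℝ)⁻¹) i * (M.map (Int.cast : ℤ → ℝ)) j i) := by
      ext j i; simp [hB]
    rw [this, Matrix.det_mul_row]
    apply mul_ne_zero
    · apply Finset.prod_ne_zero_iff.mpr
      intro i _
      split_ifs
      · exact one_ne_zero
      · exact inv_ne_zero hk0
    · have h2 : ((M.det : ℤ) : ℝ) = (M.map (Int.cast : ℤ → ℝ)).det := by
        exact (Int.castRingHom ℝ).map_det M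
      rw [← h2]
      exact_mod_cast Int.cast_ne_zero.mpr hdetMZ
  have hrows : LinearIndependent ℝ (fun j => B j) := by
    refine Matrix.linearIndependent_rows_iff_isUnit.mpr ?_
    exact (Matrix.isUnit_iff_isUnit_det B).mpr (isUnit_iff_ne_zero.mpr hdetB)
  rw [affineIndependent_iff]
  intro s w hw0 hws e he
  -- extend w by zero outside s
  set w' : Fin (d + 1) → ℝ := fun j => if j ∈ s then w j else 0 with hw'
  have hsum : ∑ j, w' j • B j = 0 := by
    ext i
    simp only [Finset.sum_apply, Pi.smul_apply, smul_eq_mul, Pi.zero_apply, hw', ite_mul, zero_mul]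
    rw [Finset.sum_ite_mem, Finset.univ_inter]
    rcases Nat.eq_zero_or_pos (i : ℕ) with h0 | h0
    · have h1 : ∀ x ∈ s, w x * B x i = w x := by
        intro x _
        simp [hB, hM, h0, (Fin.ext h0 : i = 0)]
      rw [Finset.sum_congr rfl h1]
      exact hw0
    · have hi : (i : ℕ) - 1 < d := by omega
      have hcoord := congrFun hws ⟨(i : ℕ) - 1, hi⟩
      simp only [Finset.sum_apply, Pi.smul_apply, smul_eq_mul, Pi.zero_apply] at hcoord
      rw [← hcoord]
      apply Finset.sum_congr rfl
      intro x _
      congr 1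
      rw [hp]
      simp only [hB, hM, Matrix.of_apply]
      rw [if_neg (by omega), if_neg (by omega)]
      have h2 : (i : ℕ) - 1 + 1 = (i : ℕ) := by omega
      simp only [h2]
      rw [div_eq_inv_mul]
      norm_cast
  have := linearIndependent_iff'.mp hrows Finset.univ w' (by simpa using hsum) e (Finset.mem_univ e)
  simpa [hw', he] using this
end

section
/- Let k be prime and define v_i = f(p_i) ∈ S^{d−1} where p_i = (1/k)·(i, i² mod k, …, i^{d−1} mod k) ∈ [0,1]^{d−1} and f(x) = (x₁−1/2, …, x_{d−1}−1/2, 1/2)/‖(x₁−1/2, …, x_{d−1}−1/2, 1/2)‖. Then for any d distinct indices i₁ < … < i_d, we have |det(v_{i₁}, …, v_{i_d})| ≥ 2^{d−1}/((d−1)!·d^{d/2}·k^{d−1}). -/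
theorem stmt_7 (k : ℕ) (hk : k.Prime) (d : ℕ) (hd : 2 ≤ d)
    (p : Fin k → Fin (d - 1) → ℝ)
    (hp : ∀ i j, p i j = ((i : ℕ) ^ ((j : ℕ) + 1) % k : ℕ) / (k : ℝ))
    (u : Fin k → Fin d → ℝ)
    (hu : ∀ i (j : Fin d), u i j =
      if hj : (j : ℕ) < d - 1 then p i ⟨j, hj⟩ - 1 / 2 else 1 / 2)
    (v : Fin k → Fin d → ℝ)
    (hv : ∀ i j, v i j = u i j / Real.sqrt (∑ j', (u i j') ^ 2))
    (idx : Fin d → Fin k) (hinj : Function.Injective idx) :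
    2 ^ (d - 1) / (Nat.factorial (d - 1) * (d : ℝ) ^ ((d : ℝ) / 2) * (k : ℝ) ^ (d - 1)) ≤
      |(Matrix.of (fun r j : Fin d => v (idx j) r)).det| := by
  obtain ⟨m, rfl⟩ : ∃ m, d = m + 1 := ⟨d - 1, by omega⟩
  have hm : 1 ≤ m := by omega
  haveI : Fact k.Prime := ⟨hk⟩
  haveI : NeZero k := ⟨hk.pos.ne'⟩
  have hk0 : (0:ℝ) < k := by exact_mod_cast hk.pos
  have hd1 : m + 1 - 1 = m := rfl
  -- integer matrix
  set N : Matrix (Fin (m+1)) (Fin (m+1)) ℤ :=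
    Matrix.of (fun r j => if (r:ℕ) < m then (((idx j : ℕ) ^ ((r:ℕ)+1) % k : ℕ) : ℤ) else 1)
    with hNdef
  set x : Fin (m+1) → ZMod k := fun j => ((idx j : ℕ) : ZMod k) with hxdef
  have hxinj : Function.Injective x := by
    intro a b hab
    apply hinj
    have ha : ((idx a : ℕ) : ZMod k).val = (idx a : ℕ) := ZMod.val_cast_of_lt (idx a).isLt
    have hb : ((idx b : ℕ) : ZMod k).val = (idx b : ℕ) := ZMod.val_cast_of_lt (idx b).isLt
    apply Fin.ext
    rw [← ha, ← hb]
    simpa [hxdef] using congrArg ZMod.val hab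
  have hmap : N.map (Int.cast : ℤ → ZMod k)
      = ((Matrix.vandermonde x).transpose).submatrix (finRotate (m+1)) id := by
    ext r j
    simp only [Matrix.map_apply, Matrix.submatrix_apply, Matrix.transpose_apply,
      Matrix.vandermonde_apply, hNdef, Matrix.of_apply, id_eq]
    have hrot : ((finRotate (m+1) r : Fin (m+1)) : ℕ)
        = if r = Fin.last m then 0 else (r:ℕ) + 1 := by
      rw [finRotate_succ_apply, Fin.val_add_one]
    by_cases hr : (r:ℕ) < m
    · have hrl : r ≠ Fin.last m := by
        intro h; rw [h] at hr; simp at hr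
      rw [if_pos hr, hrot, if_neg hrl]
      push_cast [ZMod.natCast_mod]
      ring
    · have hrl : r = Fin.last m := by
        apply Fin.ext; simp only [Fin.val_last]; omega
      rw [if_neg hr, hrot, if_pos hrl]
      simp
  have hdetN : N.det ≠ 0 := by
    intro h0
    have h1 : ((Matrix.vandermonde x).transpose.submatrix (finRotate (m+1)) id).det = 0 := by
      rw [← hmap, show N.map (Int.cast : ℤ → ZMod k) = (Int.castRingHom (ZMod k)).mapMatrix N
        from rfl, ← RingHom.map_det]
      simp [h0]
    rw [Matrix.det_permute, Matrix.det_transpose] at h1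
    have hvd : (Matrix.vandermonde x).det ≠ 0 := Matrix.det_vandermonde_ne_zero_iff.mpr hxinj
    have hsgn : ((Equiv.Perm.sign (finRotate (m+1)) : ℤ) : ZMod k) ≠ 0 := by
      rcases Int.units_eq_one_or (Equiv.Perm.sign (finRotate (m+1))) with h | h <;>
        simp [h]
    exact (mul_ne_zero hsgn hvd) h1
  have hNabs : (1:ℝ) ≤ |(N.det : ℝ)| := by
    have : (1:ℤ) ≤ |N.det| := Int.one_le_abs hdetN
    calc (1:ℝ) = ((1:ℤ):ℝ) := by norm_num
    _ ≤ ((|N.det| : ℤ) : ℝ) := by exact_mod_cast this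
    _ = |(N.det : ℝ)| := by push_cast; ring
  -- real matrices
  set lastI : Fin (m+1) := Fin.last m with hlastI
  set c : Fin (m+1) → ℝ := fun r => if (r:ℕ) < m then (k:ℝ)⁻¹ else 1/2 with hcdef
  set W : Matrix (Fin (m+1)) (Fin (m+1)) ℝ :=
    Matrix.of (fun r j => c r * (N.map (Int.cast : ℤ → ℝ)) r j) with hWdef
  set E : Matrix (Fin (m+1)) (Fin (m+1)) ℝ :=
    Matrix.of (fun r s => if r = s then 1 else if s = lastI then -1 else 0) with hEdef
  set U : Matrix (Fin (m+1)) (Fin (m+1)) ℝ := Matrix.of (fun r j => u (idx j) r) with hUdef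
  have hWlast : ∀ j, W lastI j = 1/2 := by
    intro j
    simp [hWdef, hcdef, hNdef, hlastI]
  have hUEW : U = E * W := by
    ext r j
    rw [Matrix.mul_apply]
    have key : ∀ s, E r s * W s j
        = (if s = r then W r j else 0) + (if s = lastI then (if r = lastI then 0 else -(W lastI j)) else 0) := by
      intro s
      by_cases hsr : s = r
      · subst hsr
        by_cases hsl : s = lastI
        · subst hsl; simp [hEdef]
        · simp [hEdef, hsl]
      · by_cases hsl : s = lastI
        · subst hsl
          have hr : r ≠ lastI := Ne.symm hsr
          simp [hEdef, hsr, Ne.symm hsr, hr]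
        · simp [hEdef, hsr, Ne.symm hsr, hsl]
    rw [Finset.sum_congr rfl (fun s _ => key s), Finset.sum_add_distrib,
      Finset.sum_ite_eq' Finset.univ r, Finset.sum_ite_eq' Finset.univ lastI]
    simp only [Finset.mem_univ, if_true]
    rcases eq_or_ne r lastI with rfl | hrl
    · rw [hWlast]; simp [hUdef, hu, hlastI]
    · have hr : (r:ℕ) < m := by
        have := r.isLt
        have : (r:ℕ) ≠ m := fun h => hrl (Fin.ext (by simp [hlastI, h]))
        omega
      simp only [hUdef, Matrix.of_apply, hu, hd1, hr, dif_pos, if_neg hrl]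
      rw [hWlast, hWdef]
      simp only [Matrix.of_apply, hcdef, hNdef, if_pos hr, Matrix.map_apply]
      rw [hp]
      simp only [Int.cast_natCast]
      rw [div_eq_mul_inv]
      ring
  have hEdet : E.det = 1 := by
    have htri : E.BlockTriangular id := by
      intro i j hij
      have h1 : i ≠ j := fun h => absurd h.symm (ne_of_lt hij)
      have h2 : j ≠ lastI := by
        intro h
        rw [h] at hij
        exact absurd hij (not_lt.mpr (Fin.le_last i))
      simp [hEdef, h1, h2]
    rw [Matrix.det_of_upperTriangular htri]
    simp [hEdef]
  have hWdet : W.det = ((k:ℝ)⁻¹ ^ m * (1/2)) * (N.det : ℝ) := by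
    rw [hWdef, Matrix.det_mul_column]
    have hNd : (N.map (Int.cast : ℤ → ℝ)).det = ((N.det : ℤ) : ℝ) := by
      rw [show N.map (Int.cast : ℤ → ℝ) = (Int.castRingHom ℝ).mapMatrix N
        from rfl, ← RingHom.map_det]
      rfl
    have hprod : (∏ r, c r) = (k:ℝ)⁻¹ ^ m * (1/2) := by
      rw [Fin.prod_univ_castSucc]
      have h1 : ∀ i : Fin m, c i.castSucc = (k:ℝ)⁻¹ := by
        intro i; simp [hcdef, i.isLt]
      have h2 : c (Fin.last m) = 1/2 := by simp [hcdef]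
      rw [Finset.prod_congr rfl (fun i _ => h1 i), h2]
      simp
    rw [hprod, hNd]
  have hUdet : U.det = ((k:ℝ)⁻¹ ^ m * (1/2)) * (N.det : ℝ) := by
    rw [hUEW, Matrix.det_mul, hEdet, hWdet, one_mul]
  -- norms
  set S : Fin (m+1) → ℝ := fun j => ∑ j', (u (idx j) j') ^ 2 with hSdef
  have hub : ∀ i (j : Fin (m+1)), (u i j) ^ 2 ≤ 1/4 := by
    intro i j
    have habs : |u i j| ≤ 1/2 := by
      rw [hu]
      split
      · next hj =>
        rw [hp]
        have h1 : ((i:ℕ) ^ ((⟨(j:ℕ), hj⟩ : Fin (m+1-1)):ℕ).succ % k : ℕ) < k := Nat.mod_lt _ hk.pos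
        have h2 : (0:ℝ) ≤ (((i:ℕ) ^ (((⟨(j:ℕ), hj⟩ : Fin (m+1-1)):ℕ) + 1) % k : ℕ) : ℝ) / k :=
          by positivity
        have h3 : (((i:ℕ) ^ (((⟨(j:ℕ), hj⟩ : Fin (m+1-1)):ℕ) + 1) % k : ℕ) : ℝ) / k ≤ 1 := by
          rw [div_le_one hk0]
          exact_mod_cast (Nat.mod_lt _ hk.pos).le
        rw [abs_le]; constructor <;> linarith
      · rw [abs_le]; constructor <;> norm_num
    calc (u i j)^2 = |u i j|^2 := (sq_abs _).symm
    _ ≤ (1/2)^2 := by nlinarith [abs_nonneg (u i j)]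
    _ = 1/4 := by norm_num
  have hSle : ∀ j, S j ≤ (m+1)/4 := by
    intro j
    calc S j ≤ ∑ _j' : Fin (m+1), (1/4 : ℝ) := Finset.sum_le_sum (fun j' _ => hub _ j')
    _ = (m+1)/4 := by simp; ring
  have hSge : ∀ j, (1/4:ℝ) ≤ S j := by
    intro j
    have hlv : u (idx j) lastI = 1/2 := by
      rw [hu]; simp [hlastI]
    have : (u (idx j) lastI)^2 = 1/4 := by rw [hlv]; norm_num
    rw [← this]
    exact Finset.single_le_sum (fun i _ => sq_nonneg (u (idx j) i)) (Finset.mem_univ lastI)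
  have hsqrtd : (0:ℝ) < Real.sqrt (m+1) := Real.sqrt_pos.mpr (by positivity)
  have hwb : ∀ j : Fin (m+1), 2 / Real.sqrt (m+1) ≤ (Real.sqrt (S j))⁻¹ := by
    intro j
    have hS0 : 0 < S j := lt_of_lt_of_le (by norm_num) (hSge j)
    have h1 : Real.sqrt (S j) ≤ Real.sqrt (m+1) / 2 := by
      rw [show Real.sqrt (m+1)/2 = Real.sqrt ((m+1)/4) by
        rw [show ((m:ℝ)+1)/4 = (m+1) * (1/2)^2 by ring, Real.sqrt_mul (by positivity),
          Real.sqrt_sq (by norm_num)]; ring]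
      exact Real.sqrt_le_sqrt (by push_cast; exact hSle j)
    have h2 : 0 < Real.sqrt (S j) := Real.sqrt_pos.mpr hS0
    calc 2 / Real.sqrt (m+1) = (Real.sqrt (m+1) / 2)⁻¹ := by rw [inv_div]
    _ ≤ (Real.sqrt (S j))⁻¹ := inv_anti₀ h2 h1
  -- target matrix
  set M : Matrix (Fin (m+1)) (Fin (m+1)) ℝ := Matrix.of (fun r j : Fin (m+1) => v (idx j) r)
    with hMdef
  set w : Fin (m+1) → ℝ := fun j => (Real.sqrt (S j))⁻¹ with hwdef
  have hMU : M = Matrix.of (fun r j => w j * U r j) := by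
    ext r j
    simp only [hMdef, Matrix.of_apply, hv, hUdef, hwdef, hSdef]
    rw [div_eq_mul_inv]; ring
  have hMdet : M.det = (∏ j, w j) * U.det := by rw [hMU, Matrix.det_mul_row]
  have hw0 : ∀ j, 0 < w j := by
    intro j
    have hS0 : 0 < S j := lt_of_lt_of_le (by norm_num) (hSge j)
    simp [hwdef]
    positivity
  have hprodw : (2 / Real.sqrt (m+1)) ^ (m+1) ≤ ∏ j, w j := by
    calc (2 / Real.sqrt (m+1)) ^ (m+1) = ∏ _j : Fin (m+1), (2 / Real.sqrt (m+1)) := by simp [div_pow]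
    _ ≤ ∏ j, w j := Finset.prod_le_prod (fun j _ => by positivity) (fun j _ => hwb j)
  have habsdet : ((2 / Real.sqrt (m+1)) ^ (m+1)) * ((k:ℝ)⁻¹ ^ m * (1/2)) ≤ |M.det| := by
    rw [hMdet, hUdet, abs_mul, abs_mul]
    have h1 : |∏ j, w j| = ∏ j, w j := abs_of_pos (Finset.prod_pos (fun j _ => hw0 j))
    have h2 : |(k:ℝ)⁻¹ ^ m * (1/2)| = (k:ℝ)⁻¹ ^ m * (1/2) := abs_of_pos (by positivity)
    rw [h1, h2]
    have h3 : ((2 / Real.sqrt (m+1)) ^ (m+1)) * ((k:ℝ)⁻¹ ^ m * (1/2))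
        ≤ (∏ j, w j) * ((k:ℝ)⁻¹ ^ m * (1/2)) := by
      apply mul_le_mul_of_nonneg_right hprodw (by positivity)
    calc ((2 / Real.sqrt (m+1)) ^ (m+1)) * ((k:ℝ)⁻¹ ^ m * (1/2))
        ≤ (∏ j, w j) * ((k:ℝ)⁻¹ ^ m * (1/2)) := h3
    _ = (∏ j, w j) * ((k:ℝ)⁻¹ ^ m * (1/2)) * 1 := by ring
    _ ≤ (∏ j, w j) * ((k:ℝ)⁻¹ ^ m * (1/2)) * |(N.det : ℝ)| := by
        have hpos : 0 ≤ (∏ j, w j) * ((k:ℝ)⁻¹ ^ m * (1/2)) :=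
          mul_nonneg (Finset.prod_nonneg fun j _ => (hw0 j).le) (by positivity)
        exact mul_le_mul_of_nonneg_left hNabs hpos
    _ = (∏ j, w j) * ((k:ℝ)⁻¹ ^ m * (1/2) * |(N.det:ℝ)|) := by ring
  -- final arithmetic
  have hsq : Real.sqrt (m+1) ^ (m+1) = ((m:ℝ)+1) ^ (((m:ℝ)+1)/2) := by
    rw [Real.sqrt_eq_rpow, ← Real.rpow_natCast (((m:ℝ)+1) ^ ((1:ℝ)/2)) (m+1),
      ← Real.rpow_mul (by positivity)]
    congr 1
    push_cast
    ring
  have hD0 : (0:ℝ) < ((m:ℝ)+1) ^ (((m:ℝ)+1)/2) := by positivity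
  have hfac : (1:ℝ) ≤ (Nat.factorial m : ℝ) := by exact_mod_cast Nat.one_le_iff_ne_zero.mpr (Nat.factorial_ne_zero m)
  refine le_trans ?_ habsdet
  simp only [hd1]
  have hcast : ((m+1:ℕ):ℝ) = (m:ℝ)+1 := by push_cast; ring
  rw [hcast]
  have heq : (2 / Real.sqrt (m+1)) ^ (m+1) * ((k:ℝ)⁻¹ ^ m * (1/2))
      = 2 ^ m / (((m:ℝ)+1) ^ (((m:ℝ)+1)/2) * (k:ℝ) ^ m) := by
    rw [div_pow, hsq]
    field_simp
    rw [mul_assoc, ← mul_pow, one_div, inv_mul_cancel₀ hk0.ne', one_pow, mul_one, pow_succ']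
  rw [heq]
  rw [div_le_div_iff₀ (by positivity) (by positivity)]
  calc (2:ℝ)^m * (((m:ℝ)+1) ^ (((m:ℝ)+1)/2) * (k:ℝ)^m)
      = 1 * (2^m * (((m:ℝ)+1) ^ (((m:ℝ)+1)/2) * (k:ℝ)^m)) := by ring
  _ ≤ (Nat.factorial m : ℝ) * (2^m * (((m:ℝ)+1) ^ (((m:ℝ)+1)/2) * (k:ℝ)^m)) := by
      apply mul_le_mul_of_nonneg_right hfac (by positivity)
  _ = 2^m * ((Nat.factorial m : ℝ) * ((m:ℝ)+1) ^ (((m:ℝ)+1)/2) * (k:ℝ)^m) := by ring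
end

section
/- Any straight line that intersects the region between a strictly convex function u and a strictly concave function v (with v < u pointwise) over an interval [a, b], but avoids a closed trapezoid T lying between them, and which enters this region at some point with x-coordinate in a subinterval [a', b'] ⊆ [a,b], must intersect the region at x = a' or at x = b'. Consequence: the number of lines intersecting (τ \ T) ∩ C is at most d(a') + d(b'), where d(x) counts lines intersecting τ \ T at abscissa x. -/
private lemma affine_ivt (m k x₀ x₁ : ℝ) (h₀ : m * x₀ + k < 0) (h₁ : 0 < m * x₁ + k) :
    ∃ x₂ ∈ Set.uIcc x₀ x₁, m * x₂ + k = 0 := by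
  have hc : ContinuousOn (fun x => m * x + k) (Set.uIcc x₀ x₁) := by fun_prop
  have h := intermediate_value_uIcc hc (a := x₀) (b := x₁)
  have h0 : (0 : ℝ) ∈ Set.uIcc (m * x₀ + k) (m * x₁ + k) :=
    Set.mem_uIcc.mpr (Or.inl ⟨h₀.le, h₁.le⟩)
  obtain ⟨x₂, hx₂, hfx₂⟩ := h h0
  exact ⟨x₂, hx₂, hfx₂⟩

open Classical in
theorem stmt_13 (a b a' b' : ℝ) (haa' : a ≤ a') (ha'b' : a' < b') (hb'b : b' ≤ b)
    (u v : ℝ → ℝ)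
    (hu : StrictConvexOn ℝ Set.univ u) (hv : StrictConcaveOn ℝ Set.univ v)
    (hvu : ∀ x, v x < u x)
    -- the trapezoid T lies between two affine functions g₁ ≤ g₂ over [a,b],
    -- and is contained in the region τ between v and u
    (s₁ c₁ s₂ c₂ : ℝ)
    (hT₁ : ∀ x ∈ Set.Icc a b, v x ≤ s₁ * x + c₁ ∧ s₂ * x + c₂ ≤ u x)
    (hT₂ : ∀ x ∈ Set.Icc a b, s₁ * x + c₁ ≤ s₂ * x + c₂)
    -- membership predicates for τ and T along a line y = σ x + c
    (inτ inT : ℝ → ℝ → Prop)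
    (hinτ : ∀ x y, inτ x y ↔ (a ≤ x ∧ x ≤ b ∧ v x ≤ y ∧ y ≤ u x))
    (hinT : ∀ x y, inT x y ↔ (a ≤ x ∧ x ≤ b ∧ s₁ * x + c₁ ≤ y ∧ y ≤ s₂ * x + c₂)) :
    -- main claim: a line avoiding T that meets τ \ T at some abscissa in [a', b']
    -- must meet τ \ T at a' or at b'
    (∀ σ c : ℝ,
      (∀ x ∈ Set.Icc a b, ¬ inT x (σ * x + c)) →
      (∃ x₀ ∈ Set.Icc a' b', inτ x₀ (σ * x₀ + c)) →
      ((inτ a' (σ * a' + c) ∧ ¬ inT a' (σ * a' + c)) ∨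
       (inτ b' (σ * b' + c) ∧ ¬ inT b' (σ * b' + c)))) ∧
    -- consequence: the number of such lines in a finite family L is at most d(a') + d(b')
    (∀ L : Finset (ℝ × ℝ),
      (∀ p ∈ L, ∀ x ∈ Set.Icc a b, ¬ inT x (p.1 * x + p.2)) →
      (L.filter (fun p => ∃ x₀ ∈ Set.Icc a' b',
          inτ x₀ (p.1 * x₀ + p.2) ∧ ¬ inT x₀ (p.1 * x₀ + p.2))).card ≤
        (L.filter (fun p => inτ a' (p.1 * a' + p.2) ∧ ¬ inT a' (p.1 * a' + p.2))).card +
        (L.filter (fun p => inτ b' (p.1 * b' + p.2) ∧ ¬ inT b' (p.1 * b' + p.2))).card) := by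
  have ha'ab : a' ∈ Set.Icc a b := ⟨haa', le_trans ha'b'.le hb'b⟩
  have hb'ab : b' ∈ Set.Icc a b := ⟨le_trans haa' ha'b'.le, hb'b⟩
  have hmain : ∀ σ c : ℝ,
      (∀ x ∈ Set.Icc a b, ¬ inT x (σ * x + c)) →
      (∃ x₀ ∈ Set.Icc a' b', inτ x₀ (σ * x₀ + c)) →
      ((inτ a' (σ * a' + c) ∧ ¬ inT a' (σ * a' + c)) ∨
       (inτ b' (σ * b' + c) ∧ ¬ inT b' (σ * b' + c))) := by
    intro σ c havoid hex
    obtain ⟨x₀, hx₀, hτ⟩ := hex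
    have hx₀ab : x₀ ∈ Set.Icc a b :=
      ⟨le_trans haa' hx₀.1, le_trans hx₀.2 hb'b⟩
    rw [hinτ] at hτ
    obtain ⟨_, _, hvℓ, hℓu⟩ := hτ
    -- on [a,b] the line is strictly below g₁ or strictly above g₂
    have hband : ∀ x ∈ Set.Icc a b,
        σ * x + c < s₁ * x + c₁ ∨ s₂ * x + c₂ < σ * x + c := by
      intro x hx
      by_contra hcon
      push_neg at hcon
      exact havoid x hx ((hinT x _).mpr ⟨hx.1, hx.2, hcon.1, hcon.2⟩)
    -- convex combination data for x₀ between a' and b'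
    have hd : 0 < b' - a' := by linarith [ha'b']
    set t : ℝ := (b' - x₀) / (b' - a') with ht
    set s : ℝ := (x₀ - a') / (b' - a') with hs
    have ht0 : 0 ≤ t := div_nonneg (by linarith [hx₀.2]) hd.le
    have hs0 : 0 ≤ s := div_nonneg (by linarith [hx₀.1]) hd.le
    have hts : t + s = 1 := by rw [ht, hs]; field_simp; ring
    have hcomb : t * a' + s * b' = x₀ := by rw [ht, hs]; field_simp; ring
    have hlin : t * (σ * a' + c) + s * (σ * b' + c) = σ * x₀ + c := by
      linear_combination σ * hcomb + c * hts
    rcases hband x₀ hx₀ab with hlow | hhigh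
    · -- line strictly below g₁ on all of [a,b]
      have hall : ∀ x ∈ Set.Icc a b, σ * x + c < s₁ * x + c₁ := by
        intro x hx
        rcases hband x hx with h | h
        · exact h
        · exfalso
          obtain ⟨x₂, hx₂m, hx₂e⟩ := affine_ivt (σ - s₁) (c - c₁) x₀ x
            (by linarith) (by linarith [hT₂ x hx])
          have hx₂ab : x₂ ∈ Set.Icc a b := by
            have : Set.uIcc x₀ x ⊆ Set.Icc a b :=
              Set.uIcc_subset_Icc hx₀ab hx
            exact this hx₂m
          rcases hband x₂ hx₂ab with h' | h'
          · nlinarith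
          · nlinarith [hT₂ x₂ hx₂ab]
      -- at each endpoint the line is below u
      have hua' : σ * a' + c ≤ u a' := by
        have := hall a' ha'ab
        have := hT₂ a' ha'ab
        have := (hT₁ a' ha'ab).2
        linarith
      have hub' : σ * b' + c ≤ u b' := by
        have := hall b' hb'ab
        have := hT₂ b' hb'ab
        have := (hT₁ b' hb'ab).2
        linarith
      -- line is above v at a' or b'
      by_contra hcon
      push_neg at hcon
      obtain ⟨h1, h2⟩ := hcon
      have hva' : σ * a' + c < v a' := by
        by_contra h
        push_neg at h
        exact havoid a' ha'ab (h1 ((hinτ a' _).mpr ⟨ha'ab.1, ha'ab.2, h, hua'⟩))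
      have hvb' : σ * b' + c < v b' := by
        by_contra h
        push_neg at h
        exact havoid b' hb'ab (h2 ((hinτ b' _).mpr ⟨hb'ab.1, hb'ab.2, h, hub'⟩))
      have hconc := hv.concaveOn.2 (Set.mem_univ a') (Set.mem_univ b') ht0 hs0 hts
      simp only [smul_eq_mul, hcomb] at hconc
      have hstrict : t * (σ * a' + c) + s * (σ * b' + c) < t * v a' + s * v b' := by
        have h1 : s * (σ * b' + c) ≤ s * v b' :=
          mul_le_mul_of_nonneg_left hvb'.le hs0
        have h2 : t * (σ * a' + c) ≤ t * v a' :=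
          mul_le_mul_of_nonneg_left hva'.le ht0
        rcases lt_or_ge 0 t with htp | htz
        · have h3 : t * (σ * a' + c) < t * v a' :=
            mul_lt_mul_of_pos_left hva' htp
          linarith
        · have hsp : 0 < s := by linarith
          have h3 : s * (σ * b' + c) < s * v b' :=
            mul_lt_mul_of_pos_left hvb' hsp
          linarith
      linarith [hlin, hconc, hvℓ, hstrict]
    · -- line strictly above g₂ on all of [a,b]
      have hall : ∀ x ∈ Set.Icc a b, s₂ * x + c₂ < σ * x + c := by
        intro x hx
        rcases hband x hx with h | h
        · exfalso
          obtain ⟨x₂, hx₂m, hx₂e⟩ := affine_ivt (s₂ - σ) (c₂ - c) x₀ x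
            (by linarith) (by linarith [hT₂ x hx])
          have hx₂ab : x₂ ∈ Set.Icc a b := by
            have : Set.uIcc x₀ x ⊆ Set.Icc a b :=
              Set.uIcc_subset_Icc hx₀ab hx
            exact this hx₂m
          rcases hband x₂ hx₂ab with h' | h'
          · nlinarith [hT₂ x₂ hx₂ab]
          · nlinarith
        · exact h
      have hva' : v a' ≤ σ * a' + c := by
        have := hall a' ha'ab
        have := hT₂ a' ha'ab
        have := (hT₁ a' ha'ab).1
        linarith
      have hvb' : v b' ≤ σ * b' + c := by
        have := hall b' hb'ab
        have := hT₂ b' hb'ab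
        have := (hT₁ b' hb'ab).1
        linarith
      by_contra hcon
      push_neg at hcon
      obtain ⟨h1, h2⟩ := hcon
      have hua' : u a' < σ * a' + c := by
        by_contra h
        push_neg at h
        exact havoid a' ha'ab (h1 ((hinτ a' _).mpr ⟨ha'ab.1, ha'ab.2, hva', h⟩))
      have hub' : u b' < σ * b' + c := by
        by_contra h
        push_neg at h
        exact havoid b' hb'ab (h2 ((hinτ b' _).mpr ⟨hb'ab.1, hb'ab.2, hvb', h⟩))
      have hconv := hu.convexOn.2 (Set.mem_univ a') (Set.mem_univ b') ht0 hs0 hts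
      simp only [smul_eq_mul, hcomb] at hconv
      have hstrict : t * u a' + s * u b' < t * (σ * a' + c) + s * (σ * b' + c) := by
        have h1 : s * u b' ≤ s * (σ * b' + c) :=
          mul_le_mul_of_nonneg_left hub'.le hs0
        have h2 : t * u a' ≤ t * (σ * a' + c) :=
          mul_le_mul_of_nonneg_left hua'.le ht0
        rcases lt_or_ge 0 t with htp | htz
        · have h3 : t * u a' < t * (σ * a' + c) :=
            mul_lt_mul_of_pos_left hua' htp
          linarith
        · have hsp : 0 < s := by linarith
          have h3 : s * u b' < s * (σ * b' + c) :=
            mul_lt_mul_of_pos_left hub' hsp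
          linarith
      linarith [hlin, hconv, hℓu, hstrict]
  refine ⟨hmain, ?_⟩
  intro L hL
  classical
  have hsub : (L.filter (fun p => ∃ x₀ ∈ Set.Icc a' b',
      inτ x₀ (p.1 * x₀ + p.2) ∧ ¬ inT x₀ (p.1 * x₀ + p.2))) ⊆
      (L.filter (fun p => inτ a' (p.1 * a' + p.2) ∧ ¬ inT a' (p.1 * a' + p.2))) ∪
      (L.filter (fun p => inτ b' (p.1 * b' + p.2) ∧ ¬ inT b' (p.1 * b' + p.2))) := by
    intro p hp
    rw [Finset.mem_filter] at hp
    obtain ⟨hpL, x₀, hx₀, hτ, _⟩ := hp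
    rcases hmain p.1 p.2 (hL p hpL) ⟨x₀, hx₀, hτ⟩ with h | h
    · exact Finset.mem_union_left _ (Finset.mem_filter.mpr ⟨hpL, h⟩)
    · exact Finset.mem_union_right _ (Finset.mem_filter.mpr ⟨hpL, h⟩)
  calc _ ≤ _ := Finset.card_le_card hsub
    _ ≤ _ := Finset.card_union_le _ _
end
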